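/- (Andrews–Baxter–Forrester) For all integers r ≥ 3, L ≥ 0, 1 ≤ a, b, c ≤ r−1 with c = b ± 1 and L + a − b even, the configuration sum satisfies X_L(a,b,c) = q^{(a−b)(a−c)/4} Σ_{j=−∞}^{∞} { q^{j(r(r−1)j + r(b+c−1)/2 − (r−1)a)} [ L ; (1/2)(L+a−b) − rj ] − q^{((r−1)j + (b+c−1)/2)(rj+a)} [ L ; (1/2)(L−a−b) − rj ] }, where only finitely many terms of the sum over j are nonzero. -/

import Mathlib

attribute [local instance] Classical.propDecidable

noncomputable section

variable {K : Type*} [Field K]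

/-- `(q)_n` where `q = t^4` (the variable `t` stands for `q^{1/4}`). -/
def qp (t : K) (n : ℕ) : K :=
  ∏ k ∈ Finset.range n, (1 - t ^ (4 * (k + 1)))

/-- Gaussian polynomial `[N; m]` in the variable `q = t^4`. -/
def gauss (t : K) (N m : ℤ) : K :=
  if 0 ≤ m ∧ m ≤ N then qp t N.toNat / (qp t m.toNat * qp t (N - m).toNat) else 0

/-- Gaussian polynomial `[N2/2; m]` (zero if `N2` is odd). -/
def gaussHalf (t : K) (N2 m : ℤ) : K :=
  if N2 % 2 = 0 then gauss t (N2 / 2) m else 0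

/-- Incidence matrix of the Dynkin diagram `A_d` (indices `i : Fin d` stand for `i+1`). -/
def inc (d : ℕ) (i k : Fin d) : ℤ := if (i : ℕ) + 1 = (k : ℕ) ∨ (k : ℕ) + 1 = (i : ℕ) then 1 else 0

/-- Cartan matrix of `A_d`. -/
def cartan (d : ℕ) (i k : Fin d) : ℤ := (if i = k then 2 else 0) - inc d i k

/-- the `s`-th unit vector, with the convention `e_0 = e_{d+1} = 0`. -/
def uv (d : ℕ) (s : ℤ) (i : Fin d) : ℤ := if ((i : ℕ) : ℤ) + 1 = s then 1 else 0

/-- `m_s`, with the conventions `m_0 = m_{d+1} = 0`. -/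
def mAt (d : ℕ) (m : Fin d → ℕ) (s : ℤ) : ℤ := ∑ i, uv d s i * (m i : ℤ)

/-- `mᵀ C m` for the `A_d` Cartan matrix. -/
def quadC (d : ℕ) (m : Fin d → ℕ) : ℤ := ∑ i, ∑ k, (m i : ℤ) * cartan d i k * (m k : ℤ)

/-- the vector `Q_{a,b}`. -/
def Qab (r a b : ℕ) (i : Fin (r - 3)) : ℕ :=
  min (a - 1) (r - ((i : ℕ) + 1) - 2) + min (b - 1) (r - ((i : ℕ) + 1) - 2)

/-- the parity restriction `m ≡ Q_{a,b} (mod 2)`. -/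
def parity (r a b : ℕ) (m : Fin (r - 3) → ℕ) : Prop := ∀ i, m i % 2 = Qab r a b i % 2

/-- `(I m + L e_1 + e_{r-a-1} + e_{r-b-1})_i`. -/
def topE (r a b L : ℕ) (m : Fin (r - 3) → ℕ) (i : Fin (r - 3)) : ℤ :=
  (∑ k, inc (r - 3) i k * (m k : ℤ)) + (L : ℤ) * uv (r - 3) 1 i
    + uv (r - 3) ((r : ℤ) - a - 1) i + uv (r - 3) ((r : ℤ) - b - 1) i

/-- the summand `q^{(1/4) mᵀCm - (1/2) m_{r-a-1}} ∏_j [(1/2)(Im + Le_1 + e_{r-a-1} + e_{r-b-1})_j; m_j]`,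
in the variable `t = q^{1/4}`. -/
def fermTerm (r a b L : ℕ) (t : K) (m : Fin (r - 3) → ℕ) : K :=
  t ^ (quadC (r - 3) m - 2 * mAt (r - 3) m ((r : ℤ) - a - 1))
    * ∏ i, gaussHalf t (topE r a b L m i) (m i)

/-- the fermionic sum `Σ_{m ≡ Q_{a,b}} (⋯)`. -/
def fermSum (r a b L : ℕ) (t : K) : K :=
  ∑ᶠ m : Fin (r - 3) → ℕ, if parity r a b m then fermTerm r a b L t m else 0

/-- The one-dimensional configuration sum `X_L(a,b,c)` of the ABF model:
the sum over all sequences `σ_0,…,σ_{L+1}` with values in `{0,…,r-2}`,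
`|σ_{j+1} - σ_j| = 1`, `σ_0 = a-1`, `σ_L = b-1`, `σ_{L+1} = c-1`, of
`t^(Σ_{k=1}^L k|σ_{k+1} - σ_{k-1}|)`, where `t = q^{1/4}`. -/
def conf (r L a b c : ℕ) : RatFunc ℚ :=
  ∑ σ : Fin (L + 2) → Fin (r - 1),
    (fun s : ℕ → ℤ =>
      if (∀ j, j ≤ L → |s (j + 1) - s j| = 1) ∧
          s 0 = (a : ℤ) - 1 ∧ s L = (b : ℤ) - 1 ∧ s (L + 1) = (c : ℤ) - 1
      then (RatFunc.X : RatFunc ℚ) ^ (∑ k ∈ Finset.Icc 1 L, (k : ℤ) * |s (k + 1) - s (k - 1)|)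
      else 0)
    (fun j => if h : j < L + 2 then ((σ ⟨j, h⟩ : ℕ) : ℤ) else 0)

local notation "XX" => (RatFunc.X : RatFunc ℚ)

lemma X_pow_ne_one (n : ℕ) (hn : n ≠ 0) : XX ^ n ≠ 1 := by
  intro h
  have : (Polynomial.X : Polynomial ℚ) ^ n = 1 := by
    apply RatFunc.algebraMap_injective ℚ
    simpa [map_pow, RatFunc.algebraMap_X] using h
  have := congrArg Polynomial.natDegree this
  simp [Polynomial.natDegree_X_pow] at this
  omega

lemma one_sub_X_pow_ne_zero (n : ℕ) (hn : n ≠ 0) : (1 : RatFunc ℚ) - XX ^ n ≠ 0 := by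
  intro h
  exact X_pow_ne_one n hn (by linear_combination -h)

lemma qp_ne_zero (n : ℕ) : qp XX n ≠ 0 := by
  unfold qp
  apply Finset.prod_ne_zero_iff.2
  intro k _
  exact one_sub_X_pow_ne_zero _ (by omega)

lemma gauss_neg {t : K} {N m : ℤ} (h : m < 0 ∨ N < m) : gauss t N m = 0 := by
  unfold gauss
  rw [if_neg]; omega

lemma gauss_symm (t : K) (N m : ℤ) : gauss t N m = gauss t N (N - m) := by
  unfold gauss
  by_cases h : 0 ≤ m ∧ m ≤ N
  · rw [if_pos h, if_pos (by omega)]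
    rw [show N - (N - m) = m by ring]
    rw [mul_comm]
  · rw [if_neg h, if_neg (by omega)]

lemma gauss_zero_left (t : K) (m : ℤ) : gauss t 0 m = if m = 0 then 1 else 0 := by
  unfold gauss
  by_cases h : m = 0 <;> simp [h, qp]
  · omega

lemma qp_succ (t : K) (n : ℕ) : qp t (n + 1) = qp t n * (1 - t ^ (4 * (n + 1))) := by
  unfold qp
  rw [Finset.prod_range_succ]

lemma qp_zero (t : K) : qp t 0 = 1 := by simp [qp]

lemma gauss_eq (t : K) (N m : ℤ) (n mm : ℕ) (hn : N = (n : ℤ)) (hm : m = (mm : ℤ))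
    (hle : mm ≤ n) : gauss t N m = qp t n / (qp t mm * qp t (n - mm)) := by
  subst hn hm
  unfold gauss
  rw [if_pos (show (0:ℤ) ≤ (mm:ℤ) ∧ (mm:ℤ) ≤ (n:ℤ) by omega)]
  rw [show ((n:ℤ)).toNat = n from by omega, show ((mm:ℤ)).toNat = mm from by omega,
    show ((n:ℤ) - mm).toNat = n - mm from by omega]

/-- q-Pascal, first form. -/
lemma gauss_pascal₁ (N m : ℤ) (hN : 1 ≤ N) :
    gauss XX N m = gauss XX (N - 1) m + XX ^ (4 * (N - m)) * gauss XX (N - 1) (m - 1) := by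
  by_cases h0 : m < 0 ∨ N < m
  · rw [gauss_neg (show m < 0 ∨ N < m from h0),
      gauss_neg (show m < 0 ∨ N - 1 < m from by omega),
      gauss_neg (show m - 1 < 0 ∨ N - 1 < m - 1 from by omega)]
    simp
  push_neg at h0
  obtain ⟨h0, h1⟩ := h0
  by_cases hm0 : m = 0
  · subst hm0
    rw [gauss_neg (show (0:ℤ) - 1 < 0 ∨ N - 1 < 0 - 1 from by omega)]
    rw [gauss_eq XX N 0 N.toNat 0 (by omega) (by omega) (by omega),
      gauss_eq XX (N-1) 0 (N-1).toNat 0 (by omega) (by omega) (by omega)]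
    simp only [Nat.sub_zero, qp_zero, one_mul, mul_zero, add_zero]
    rw [div_self (qp_ne_zero _), div_self (qp_ne_zero _)]
  by_cases hmN : m = N
  · subst hmN
    rw [gauss_neg (show m < 0 ∨ m - 1 < m from by omega)]
    rw [gauss_eq XX m m m.toNat m.toNat (by omega) (by omega) le_rfl,
      gauss_eq XX (m-1) (m-1) (m-1).toNat (m-1).toNat (by omega) (by omega) le_rfl]
    simp only [Nat.sub_self, qp_zero, mul_one, zero_add, sub_self, mul_zero, zpow_zero, one_mul]
    rw [div_self (qp_ne_zero _), div_self (qp_ne_zero _)]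
  · -- main case: 1 ≤ m ≤ N - 1
    obtain ⟨j, hj⟩ : ∃ j : ℕ, m = (j : ℤ) + 1 := ⟨(m - 1).toNat, by omega⟩
    obtain ⟨k, hk⟩ : ∃ k : ℕ, N = (j : ℤ) + (k : ℤ) + 2 := ⟨(N - m - 1).toNat, by omega⟩
    subst hj hk
    rw [gauss_eq XX _ _ (j + k + 2) (j + 1) (by push_cast; ring) (by push_cast; ring)
        (by omega),
      gauss_eq XX _ _ (j + k + 1) (j + 1) (by push_cast; ring) (by push_cast; ring)
        (by omega),
      gauss_eq XX _ _ (j + k + 1) j (by push_cast; ring) (by push_cast; ring) (by omega)]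
    rw [show (4:ℤ) * ((j:ℤ) + k + 2 - ((j:ℤ) + 1)) = ((4 * (k + 1) : ℕ) : ℤ) from by
        push_cast; ring,
      zpow_natCast]
    rw [show j + k + 2 - (j + 1) = k + 1 from by omega,
      show j + k + 1 - (j + 1) = k from by omega,
      show j + k + 1 - j = k + 1 from by omega]
    rw [show (j + k + 2) = (j + k + 1) + 1 from by ring, qp_succ,
      show qp XX (j + 1) = qp XX j * (1 - XX ^ (4 * (j + 1))) from qp_succ _ _,
      show qp XX (k + 1) = qp XX k * (1 - XX ^ (4 * (k + 1))) from qp_succ _ _]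
    have key : XX ^ (4 * (j + k + 1 + 1)) = XX ^ (4 * (j + 1)) * XX ^ (4 * (k + 1)) := by
      rw [← pow_add]; ring_nf
    rw [key]
    have h1 := qp_ne_zero j
    have h2 := qp_ne_zero k
    have h5 := qp_ne_zero (j + k + 1)
    have h3 : (1 : RatFunc ℚ) - XX ^ (4 * (j + 1)) ≠ 0 := one_sub_X_pow_ne_zero _ (by omega)
    have h4 : (1 : RatFunc ℚ) - XX ^ (4 * (k + 1)) ≠ 0 := one_sub_X_pow_ne_zero _ (by omega)
    field_simp
    ring

/-- q-Pascal, second form. -/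
lemma gauss_pascal₂ (N m : ℤ) (hN : 1 ≤ N) :
    gauss XX N m = XX ^ (4 * m) * gauss XX (N - 1) m + gauss XX (N - 1) (m - 1) := by
  rw [gauss_symm _ N m, gauss_pascal₁ _ _ hN, gauss_symm _ (N-1) (N - m),
    gauss_symm _ (N-1) (N - m - 1)]
  rw [show N - 1 - (N - m) = m - 1 by ring, show N - 1 - (N - m - 1) = m by ring,
    show (4:ℤ) * (N - (N - m)) = 4 * m by ring]
  ring

/-- The `j`-th summand of the bosonic series. -/
def bosF (r a B L μ : ℤ) (j : ℤ) : RatFunc ℚ :=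
  XX ^ (4*(j*(r*(r-1)*j + r*B - (r-1)*a))) * gauss XX L (μ - r*j)
    - XX ^ (4*(((r-1)*j + B)*(r*j+a))) * gauss XX L (μ - a - r*j)

/-- The bosonic series. -/
def bos (r a B L μ : ℤ) : RatFunc ℚ := ∑ᶠ j : ℤ, bosF r a B L μ j

lemma supp_gauss (r L m0 : ℤ) (hr : 1 ≤ r) (e : ℤ → ℤ) :
    (Function.support fun j : ℤ => XX ^ (e j) * gauss XX L (m0 - r*j)).Finite := by
  apply Set.Finite.subset (Set.finite_Icc (-(|m0| + |L|)) (|m0| + |L|))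
  intro j hj
  simp only [Function.mem_support] at hj
  have hg : gauss XX L (m0 - r*j) ≠ 0 := fun h => hj (by rw [h, mul_zero])
  have h1 : 0 ≤ m0 - r*j ∧ m0 - r*j ≤ L := by
    by_contra h; exact hg (gauss_neg (by omega))
  have hm := le_abs_self m0
  have hm' := neg_abs_le m0
  have hLa := le_abs_self L
  have hL0 := abs_nonneg L
  have hm0' := abs_nonneg m0
  simp only [Set.mem_Icc]
  rcases le_or_gt 0 j with hj0 | hj0
  · have hb : (r - 1) * j ≥ 0 := mul_nonneg (by omega) hj0
    constructor <;> nlinarith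
  · have hb : (r - 1) * j ≤ 0 := mul_nonpos_of_nonneg_of_nonpos (by omega) (by omega)
    constructor <;> nlinarith

lemma supp1 (r a B L μ : ℤ) (hr : 1 ≤ r) :
    (Function.support fun j : ℤ =>
      XX ^ (4*(j*(r*(r-1)*j + r*B - (r-1)*a))) * gauss XX L (μ - r*j)).Finite :=
  supp_gauss r L μ hr _

lemma supp2 (r a B L μ : ℤ) (hr : 1 ≤ r) :
    (Function.support fun j : ℤ =>
      XX ^ (4*(((r-1)*j + B)*(r*j+a))) * gauss XX L (μ - a - r*j)).Finite :=
  supp_gauss r L (μ - a) hr _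

lemma suppF (r a B L μ : ℤ) (hr : 1 ≤ r) :
    (Function.support (bosF r a B L μ)).Finite := by
  apply Set.Finite.subset ((supp1 r a B L μ hr).union (supp2 r a B L μ hr))
  intro j hj
  simp only [Function.mem_support, bosF] at hj
  simp only [Set.mem_union, Function.mem_support]
  by_contra h
  push_neg at h
  rw [h.1, h.2, sub_zero] at hj
  exact hj rfl

lemma bos_vanish₀ (r a L μ : ℤ) (hr : 1 ≤ r) (hμ : 2*μ = L + a) : bos r a 0 L μ = 0 := by
  unfold bos bosF
  rw [finsum_sub_distrib (supp1 r a 0 L μ hr) (supp2 r a 0 L μ hr)]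
  rw [sub_eq_zero]
  rw [← finsum_comp_equiv (Equiv.neg ℤ)
    (f := fun j => XX ^ (4*(((r-1)*j + 0)*(r*j+a))) * gauss XX L (μ - a - r*j))]
  apply finsum_congr
  intro j
  simp only [Equiv.neg_apply]
  rw [show μ - a - r * (-j) = μ - a + r*j by ring, gauss_symm XX L (μ - a + r*j),
    show L - (μ - a + r*j) = μ - r*j by omega,
    show 4*(((r-1)*(-j) + 0)*(r*(-j)+a)) = 4*(j*(r*(r-1)*j + r*0 - (r-1)*a)) by ring]

lemma bos_vanish_r (r a L μ : ℤ) (hr : 1 ≤ r) (hμ : 2*μ = L + a - r) :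
    bos r a (r-1) L μ = 0 := by
  unfold bos bosF
  rw [finsum_sub_distrib (supp1 r a (r-1) L μ hr) (supp2 r a (r-1) L μ hr)]
  rw [sub_eq_zero]
  rw [← finsum_comp_equiv ((Equiv.addRight (1:ℤ)).trans (Equiv.neg ℤ))
    (f := fun j => XX ^ (4*(((r-1)*j + (r-1))*(r*j+a))) * gauss XX L (μ - a - r*j))]
  apply finsum_congr
  intro j
  simp only [Equiv.trans_apply, Equiv.coe_addRight, Equiv.neg_apply]
  rw [show μ - a - r * (-(j+1)) = μ - a + r*j + r by ring,
    gauss_symm XX L (μ - a + r*j + r),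
    show L - (μ - a + r*j + r) = μ - r*j by omega,
    show 4*(((r-1)*(-(j+1)) + (r-1))*(r*(-(j+1))+a))
      = 4*(j*(r*(r-1)*j + r*(r-1) - (r-1)*a)) by ring]

lemma bos_rec₁ (r a B L μ : ℤ) (hr : 1 ≤ r) (hL : 1 ≤ L) :
    bos r a B L μ = bos r a B (L-1) (μ-1) + XX^(4*μ) * bos r a (B-1) (L-1) μ := by
  unfold bos
  rw [mul_finsum _ _]
  rw [← finsum_add_distrib (suppF r a B (L-1) (μ-1) hr)
    (by
      apply Set.Finite.subset (suppF r a (B-1) (L-1) μ hr)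
      intro j hj
      simp only [Function.mem_support] at hj ⊢
      intro h
      rw [h, mul_zero] at hj
      exact hj rfl)]
  apply finsum_congr
  intro j
  unfold bosF
  have Xne : (RatFunc.X : RatFunc ℚ) ≠ 0 := RatFunc.X_ne_zero
  rw [gauss_pascal₂ L (μ - r*j) hL, gauss_pascal₂ L (μ - a - r*j) hL]
  rw [show μ - r*j - 1 = μ - 1 - r*j by ring, show μ - a - r*j - 1 = μ - 1 - a - r*j by ring]
  have e1 : XX^(4*(j*(r*(r-1)*j + r*B - (r-1)*a))) * XX^(4*(μ - r*j))
      = XX^(4*μ) * XX^(4*(j*(r*(r-1)*j + r*(B-1) - (r-1)*a))) := by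
    rw [← zpow_add₀ Xne, ← zpow_add₀ Xne]; congr 1; ring
  have e2 : XX^(4*(((r-1)*j + B)*(r*j+a))) * XX^(4*(μ - a - r*j))
      = XX^(4*μ) * XX^(4*(((r-1)*j + (B-1))*(r*j+a))) := by
    rw [← zpow_add₀ Xne, ← zpow_add₀ Xne]; congr 1; ring
  linear_combination (gauss XX (L-1) (μ - r*j)) * e1 - (gauss XX (L-1) (μ - a - r*j)) * e2

lemma bos_rec₂ (r a B L μ : ℤ) (hr : 1 ≤ r) (hL : 1 ≤ L) :
    bos r a B L μ = bos r a B (L-1) μ + XX^(4*(L-μ)) * bos r a (B+1) (L-1) (μ-1) := by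
  unfold bos
  rw [mul_finsum _ _]
  rw [← finsum_add_distrib (suppF r a B (L-1) μ hr)
    (by
      apply Set.Finite.subset (suppF r a (B+1) (L-1) (μ-1) hr)
      intro j hj
      simp only [Function.mem_support] at hj ⊢
      intro h
      rw [h, mul_zero] at hj
      exact hj rfl)]
  apply finsum_congr
  intro j
  unfold bosF
  have Xne : (RatFunc.X : RatFunc ℚ) ≠ 0 := RatFunc.X_ne_zero
  rw [gauss_pascal₁ L (μ - r*j) hL, gauss_pascal₁ L (μ - a - r*j) hL]
  rw [show μ - r*j - 1 = μ - 1 - r*j by ring, show μ - a - r*j - 1 = μ - 1 - a - r*j by ring]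
  have e1 : XX^(4*(j*(r*(r-1)*j + r*B - (r-1)*a))) * XX^(4*(L - (μ - r*j)))
      = XX^(4*(L-μ)) * XX^(4*(j*(r*(r-1)*j + r*(B+1) - (r-1)*a))) := by
    rw [← zpow_add₀ Xne, ← zpow_add₀ Xne]; congr 1; ring
  have e2 : XX^(4*(((r-1)*j + B)*(r*j+a))) * XX^(4*(L - (μ - a - r*j)))
      = XX^(4*(L-μ)) * XX^(4*(((r-1)*j + (B+1))*(r*j+a))) := by
    rw [← zpow_add₀ Xne, ← zpow_add₀ Xne]; congr 1; ring
  linear_combination (gauss XX (L-1) (μ - 1 - r*j)) * e1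
    - (gauss XX (L-1) (μ - 1 - a - r*j)) * e2

lemma rj_ne (r x v : ℤ) (hr : 3 ≤ r) (hx : x ≠ 0) (hv1 : -r < v) (hv2 : v < r) :
    v - r*x ≠ 0 := by
  intro h
  rcases lt_or_gt_of_ne hx with h1 | h1 <;> nlinarith

lemma bos_base (r a B μ : ℤ) (hr : 3 ≤ r) (hμ1 : -(r-2) ≤ 2*μ) (hμ2 : 2*μ ≤ r-2)
    (ha1 : 2 ≤ 2*(a-μ)) (ha2 : 2*(a-μ) ≤ 2*r-2) :
    bos r a B 0 μ = if μ = 0 then 1 else 0 := by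
  unfold bos
  rw [finsum_eq_single _ 0]
  · unfold bosF
    rw [show μ - r*0 = μ by ring, show μ - a - r*0 = μ - a by ring,
      gauss_zero_left, gauss_zero_left,
      if_neg (show ¬ (μ - a = 0) by omega),
      show (4*((0:ℤ)*(r*(r-1)*0 + r*B - (r-1)*a))) = 0 by ring]
    simp
  · intro x hx
    unfold bosF
    rw [gauss_zero_left, gauss_zero_left,
      if_neg (rj_ne r x μ hr hx (by omega) (by omega)),
      if_neg (rj_ne r x (μ - a) hr hx (by omega) (by omega))]
    simp

def sfun (r L : ℕ) (σ : Fin (L + 2) → Fin (r - 1)) : ℕ → ℤ :=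
  fun j => if h : j < L + 2 then ((σ ⟨j, h⟩ : ℕ) : ℤ) else 0

lemma conf_def (r L a b c : ℕ) : conf r L a b c =
    ∑ σ : Fin (L + 2) → Fin (r - 1),
      if (∀ j, j ≤ L → |sfun r L σ (j + 1) - sfun r L σ j| = 1) ∧
          sfun r L σ 0 = (a : ℤ) - 1 ∧ sfun r L σ L = (b : ℤ) - 1 ∧
          sfun r L σ (L + 1) = (c : ℤ) - 1
      then XX ^ (∑ k ∈ Finset.Icc 1 L, (k : ℤ) * |sfun r L σ (k + 1) - sfun r L σ (k - 1)|)
      else 0 := rfl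

lemma sfun_nonneg (r L : ℕ) (σ : Fin (L + 2) → Fin (r - 1)) (j : ℕ) : 0 ≤ sfun r L σ j := by
  unfold sfun
  split
  · positivity
  · exact le_refl 0

lemma sfun_le (r L : ℕ) (hr : 3 ≤ r) (σ : Fin (L + 2) → Fin (r - 1)) (j : ℕ) :
    sfun r L σ j ≤ (r : ℤ) - 2 := by
  unfold sfun
  split
  · rename_i h
    have := (σ ⟨j, h⟩).isLt
    omega
  · omega

lemma conf_b_zero (r L a c : ℕ) : conf r L a 0 c = 0 := by
  rw [conf_def]
  apply Finset.sum_eq_zero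
  intro σ _
  rw [if_neg]
  rintro ⟨-, -, h, -⟩
  have := sfun_nonneg r L σ L
  omega

lemma conf_b_r (r L a c : ℕ) (hr : 3 ≤ r) : conf r L a r c = 0 := by
  rw [conf_def]
  apply Finset.sum_eq_zero
  intro σ _
  rw [if_neg]
  rintro ⟨-, -, h, -⟩
  have := sfun_le r L hr σ L
  omega

lemma sfun_val (r L : ℕ) (σ : Fin (L + 2) → Fin (r - 1)) (j : ℕ) (hj : j < L + 2) :
    sfun r L σ j = ((σ ⟨j, hj⟩ : ℕ) : ℤ) := by
  unfold sfun
  rw [dif_pos hj]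

lemma conf_zero (r a b c : ℕ) (hr : 3 ≤ r) (ha : 1 ≤ a) (ha' : a ≤ r - 1)
    (hc : 1 ≤ c) (hc' : c ≤ r - 1) (hbc : c = b + 1 ∨ c + 1 = b) :
    conf r 0 a b c = if a = b then 1 else 0 := by
  rw [conf_def]
  by_cases hab : a = b
  · subst hab
    rw [if_pos rfl]
    have hc1 : c - 1 < r - 1 := by omega
    have ha1 : a - 1 < r - 1 := by omega
    set σ0 : Fin 2 → Fin (r - 1) := ![⟨a - 1, ha1⟩, ⟨c - 1, hc1⟩] with hσ0
    have hz : (⟨0, by omega⟩ : Fin 2) = 0 := rfl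
    have ho : (⟨1, by omega⟩ : Fin 2) = 1 := rfl
    have hs0 : sfun r 0 σ0 0 = (a : ℤ) - 1 := by
      rw [sfun_val r 0 σ0 0 (by omega), hz]
      simp only [hσ0, Matrix.cons_val_zero]
      omega
    have hs1 : sfun r 0 σ0 1 = (c : ℤ) - 1 := by
      rw [sfun_val r 0 σ0 1 (by omega), ho]
      simp only [hσ0, Matrix.cons_val_one, Matrix.head_cons, Matrix.cons_val_zero]
      omega
    rw [Finset.sum_eq_single σ0]
    · rw [if_pos]
      · rw [show Finset.Icc 1 0 = ∅ from rfl, Finset.sum_empty, zpow_zero]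
      refine ⟨?_, hs0, hs0, hs1⟩
      intro j hj
      have hj0 : j = 0 := by omega
      subst hj0
      rw [hs0, hs1, show ((c:ℤ) - 1) - ((a:ℤ) - 1) = (c:ℤ) - a by ring]
      rcases hbc with h | h
      · rw [show (c:ℤ) - (a:ℤ) = 1 by omega]; simp
      · rw [show (c:ℤ) - (a:ℤ) = -1 by omega]; simp
    · intro σ _ hσ
      rw [if_neg]
      rintro ⟨-, h0, -, h1⟩
      apply hσ
      rw [sfun_val r 0 σ 0 (by omega), hz] at h0
      rw [sfun_val r 0 σ (0 + 1) (by omega),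
        show (⟨0 + 1, by omega⟩ : Fin 2) = 1 from rfl] at h1
      funext i
      rcases (by omega : (i : ℕ) = 0 ∨ (i : ℕ) = 1) with h | h
      · have hi : i = ⟨0, by omega⟩ := Fin.ext h
        rw [hi, hz]
        apply Fin.ext
        have h2 : ((σ0 0 : ℕ) : ℤ) = (a : ℤ) - 1 := by
          simp only [hσ0, Matrix.cons_val_zero]; omega
        omega
      · have hi : i = ⟨1, by omega⟩ := Fin.ext h
        rw [hi, ho]
        apply Fin.ext
        have h2 : ((σ0 1 : ℕ) : ℤ) = (c : ℤ) - 1 := by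
          simp only [hσ0, Matrix.cons_val_one, Matrix.head_cons, Matrix.cons_val_zero]; omega
        omega
    · intro h
      exact absurd (Finset.mem_univ σ0) h
  · rw [if_neg hab]
    apply Finset.sum_eq_zero
    intro σ _
    rw [if_neg]
    rintro ⟨-, h0, h1, -⟩
    omega

lemma sfun_snoc (r L : ℕ) (τ : Fin (L + 2) → Fin (r - 1)) (v : Fin (r - 1)) (j : ℕ)
    (hj : j < L + 2) :
    sfun r (L + 1) (Fin.snoc τ v) j = sfun r L τ j := by
  rw [sfun_val r (L+1) _ j (by omega), sfun_val r L τ j hj]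
  congr 1
  have h1 : (⟨j, by omega⟩ : Fin (L + 3)) = Fin.castSucc ⟨j, hj⟩ := rfl
  rw [h1, Fin.snoc_castSucc]

lemma sfun_snoc_last (r L : ℕ) (τ : Fin (L + 2) → Fin (r - 1)) (v : Fin (r - 1)) :
    sfun r (L + 1) (Fin.snoc τ v) (L + 2) = (v : ℤ) := by
  rw [sfun_val r (L+1) _ (L+2) (by omega)]
  congr 1
  have h1 : (⟨L + 2, by omega⟩ : Fin (L + 3)) = Fin.last (L + 2) := rfl
  rw [h1, Fin.snoc_last]

lemma conf_rec (r L a b c d : ℕ) (hr : 3 ≤ r) (hb : 1 ≤ b) (hc : 1 ≤ c) (hc' : c ≤ r - 1)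
    (hcd : (c : ℤ) - b = 1 ∨ (c : ℤ) - b = -1) (hd : (d : ℤ) = 2 * b - c) :
    conf r (L + 1) a b c
      = conf r L a c b + XX ^ (2 * (L : ℤ) + 2) * conf r L a d b := by
  rw [conf_def, conf_def, conf_def]
  rw [← Equiv.sum_comp (Fin.snocEquiv (fun _ : Fin (L + 3) => Fin (r - 1)))]
  rw [Fintype.sum_prod_type]
  have hc1 : c - 1 < r - 1 := by omega
  set v0 : Fin (r - 1) := ⟨c - 1, hc1⟩ with hv0
  have hv0c : (v0 : ℤ) = (c : ℤ) - 1 := by simp only [hv0]; omega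
  rw [Finset.sum_eq_single v0]
  · -- main: the τ-sum at v = v0
    rw [Finset.mul_sum, ← Finset.sum_add_distrib]
    apply Finset.sum_congr rfl
    intro τ _
    have he : (Fin.snocEquiv (fun _ : Fin (L + 3) => Fin (r - 1))) (v0, τ) = Fin.snoc τ v0 :=
      rfl
    rw [he]
    set s' := sfun r (L + 1) (Fin.snoc τ v0) with hs'
    set st := sfun r L τ with hst
    have F1 : ∀ j, j < L + 2 → s' j = st j := fun j hj => sfun_snoc r L τ v0 j hj
    have F2 : s' (L + 1 + 1) = (c : ℤ) - 1 := by rw [hs', sfun_snoc_last]; exact hv0c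
    have hlt : ∀ k, |st k| ≤ |st k| := fun _ => le_refl _
    -- exponent decomposition
    have hE : (∑ k ∈ Finset.Icc 1 (L + 1), (k : ℤ) * |s' (k + 1) - s' (k - 1)|)
        = (∑ k ∈ Finset.Icc 1 L, (k : ℤ) * |st (k + 1) - st (k - 1)|)
          + ((L : ℤ) + 1) * |((c : ℤ) - 1) - st L| := by
      rw [Finset.sum_Icc_succ_top (by omega)]
      congr 1
      · apply Finset.sum_congr rfl
        intro k hk
        simp only [Finset.mem_Icc] at hk
        rw [F1 (k + 1) (by omega), F1 (k - 1) (by omega)]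
      · rw [show L + 1 + 1 = L + 2 from rfl, show L + 1 - 1 = L from rfl,
          show s' (L + 2) = (c : ℤ) - 1 from F2, F1 L (by omega)]
        push_cast
        ring
    -- condition equivalence
    have hCond : ((∀ j, j ≤ L + 1 → |s' (j + 1) - s' j| = 1) ∧
          s' 0 = (a : ℤ) - 1 ∧ s' (L + 1) = (b : ℤ) - 1 ∧ s' (L + 1 + 1) = (c : ℤ) - 1)
        ↔ ((∀ j, j ≤ L → |st (j + 1) - st j| = 1) ∧
          st 0 = (a : ℤ) - 1 ∧ st (L + 1) = (b : ℤ) - 1) := by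
      constructor
      · rintro ⟨h1, h2, h3, -⟩
        refine ⟨fun j hj => ?_, ?_, ?_⟩
        · rw [← F1 (j + 1) (by omega), ← F1 j (by omega)]
          exact h1 j (by omega)
        · rw [← F1 0 (by omega)]; exact h2
        · rw [← F1 (L + 1) (by omega)]; exact h3
      · rintro ⟨h1, h2, h3⟩
        refine ⟨fun j hj => ?_, ?_, ?_, F2⟩
        · rcases Nat.lt_or_ge j (L + 1) with hj' | hj'
          · rw [F1 (j + 1) (by omega), F1 j (by omega)]
            exact h1 j (by omega)
          · have hj2 : j = L + 1 := by omega
            subst hj2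
            rw [show L + 1 + 1 = L + 2 from rfl] at F2 ⊢
            rw [F2, F1 (L + 1) (by omega), h3]
            rcases hcd with h | h
            · rw [show ((c:ℤ) - 1) - ((b:ℤ) - 1) = 1 by omega]; simp
            · rw [show ((c:ℤ) - 1) - ((b:ℤ) - 1) = -1 by omega]; simp
        · rw [F1 0 (by omega)]; exact h2
        · rw [F1 (L + 1) (by omega)]; exact h3
    by_cases hX : (∀ j, j ≤ L → |st (j + 1) - st j| = 1) ∧
        st 0 = (a : ℤ) - 1 ∧ st (L + 1) = (b : ℤ) - 1
    · -- condition holds; split on st L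
      have hlast : |st (L + 1) - st L| = 1 := hX.1 L le_rfl
      have hor : st L = (c : ℤ) - 1 ∨ st L = (d : ℤ) - 1 := by
        rcases (abs_eq (by norm_num : (0:ℤ) ≤ 1)).1 hlast with h | h <;> omega
      have hcdne : (c : ℤ) - 1 ≠ (d : ℤ) - 1 := by omega
      have habs : |(c:ℤ) - (d:ℤ)| = 2 := by
        rcases hcd with h | h
        · rw [show (c:ℤ) - (d:ℤ) = 2 by omega]; norm_num
        · rw [show (c:ℤ) - (d:ℤ) = -2 by omega]; norm_num
      rcases hor with hL1 | hL1
      · rw [if_pos (hCond.mpr hX), if_pos ⟨hX.1, hX.2.1, hL1, hX.2.2⟩,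
          if_neg (by rintro ⟨-, -, hdl, -⟩; rw [hL1] at hdl; omega)]
        rw [hE, hL1, show ((c:ℤ) - 1) - ((c:ℤ) - 1) = 0 by ring, abs_zero, mul_zero,
          add_zero, mul_zero, add_zero]
      · rw [if_pos (hCond.mpr hX),
          if_neg (by rintro ⟨-, -, hdl, -⟩; rw [hL1] at hdl; omega),
          if_pos ⟨hX.1, hX.2.1, hL1, hX.2.2⟩]
        rw [hE, hL1, show ((c:ℤ) - 1) - ((d:ℤ) - 1) = (c:ℤ) - d by ring]
        rw [habs, zero_add, ← zpow_add₀ (RatFunc.X_ne_zero : XX ≠ 0)]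
        congr 1
        ring
    · rw [if_neg (by intro h; exact hX (hCond.mp h)),
        if_neg (by rintro ⟨h1, h2, h3, h4⟩; exact hX ⟨h1, h2, h4⟩),
        if_neg (by rintro ⟨h1, h2, h3, h4⟩; exact hX ⟨h1, h2, h4⟩)]
      rw [mul_zero, add_zero]
  · -- other v give zero
    intro v _ hv
    apply Finset.sum_eq_zero
    intro τ _
    have he : (Fin.snocEquiv (fun _ : Fin (L + 3) => Fin (r - 1))) (v, τ) = Fin.snoc τ v :=
      rfl
    rw [he, if_neg]
    rintro ⟨-, -, -, h⟩
    rw [sfun_snoc_last] at h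
    apply hv
    apply Fin.ext
    simp only [hv0]
    omega
  · intro h
    exact absurd (Finset.mem_univ v0) h

lemma master (r a : ℕ) (hr : 3 ≤ r) (ha : 1 ≤ a) (ha' : a ≤ r - 1) :
    ∀ L b c : ℕ, ∀ B μ : ℤ, 1 ≤ b → b ≤ r - 1 → 1 ≤ c → c ≤ r - 1 → (c = b + 1 ∨ c + 1 = b) →
      2 * B = (b:ℤ) + c - 1 → 2 * μ = (L:ℤ) + a - b →
      conf r L a b c
        = XX ^ (((a:ℤ) - b) * ((a:ℤ) - c)) * bos r a B L μ := by
  intro L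
  induction L with
  | zero =>
    intro b c B μ hb hb' hc hc' hbc hB hμ
    rw [conf_zero r a b c hr ha ha' hc hc' hbc]
    rw [show ((0:ℕ):ℤ) = (0:ℤ) from rfl]
    rw [bos_base r a B μ (by exact_mod_cast hr) (by omega) (by omega) (by omega) (by omega)]
    by_cases hab : a = b
    · rw [if_pos hab, if_pos (by omega), show ((a:ℤ) - b) = 0 by omega, zero_mul,
        zpow_zero, one_mul]
    · rw [if_neg hab, if_neg (by omega), mul_zero]
  | succ L IH =>
    intro b c B μ hb hb' hc hc' hbc hB hμ
    have hμ' : 2 * μ = (L:ℤ) + 1 + a - b := by push_cast at hμ; omega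
    have hrZ : (3:ℤ) ≤ (r:ℤ) := by exact_mod_cast hr
    have hbos' : ((L+1:ℕ):ℤ) - 1 = (L:ℤ) := by push_cast; ring
    rcases hbc with hbc | hbc
    · -- c = b + 1
      subst hbc
      rw [conf_rec r L a b (b+1) (b-1) hr hb hc hc'
        (by left; push_cast; ring) (by push_cast; omega)]
      rw [IH (b+1) b B (μ-1) (by omega) (by omega) hb hb' (by right; rfl)
        (by push_cast; omega) (by push_cast; omega)]
      have hbos := bos_rec₁ r a B ((L+1:ℕ):ℤ) μ (by omega) (by push_cast; omega)
      rw [hbos, hbos']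
      have k1 : XX ^ (((a:ℤ) - b) * ((a:ℤ) - (b+1:ℕ)))
          = XX ^ (((a:ℤ) - (b+1:ℕ)) * ((a:ℤ) - b)) := by
        congr 1; ring
      rcases Nat.lt_or_ge b 2 with hb2 | hb2
      · -- b = 1 : second terms vanish on both sides
        have hb1 : b = 1 := by omega
        subst hb1
        rw [show (1:ℕ) - 1 = 0 from rfl, conf_b_zero]
        rw [show B - 1 = 0 by omega]
        rw [bos_vanish₀ r a ((L:ℕ):ℤ) μ (by omega) (by omega)]
        simp only [mul_zero, add_zero]
        rw [k1]
      · rw [IH (b-1) b (B-1) μ (by omega) (by omega) hb hb' (by left; omega)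
          (by rw [show ((b-1:ℕ):ℤ) = (b:ℤ) - 1 by omega]; omega)
          (by rw [show ((b-1:ℕ):ℤ) = (b:ℤ) - 1 by omega]; omega)]
        have k2 : XX ^ (((a:ℤ) - b) * ((a:ℤ) - (b+1:ℕ))) * XX ^ (4*μ)
            = XX ^ (2 * (L:ℤ) + 2) * XX ^ (((a:ℤ) - (b-1:ℕ)) * ((a:ℤ) - b)) := by
          rw [← zpow_add₀ (RatFunc.X_ne_zero : XX ≠ 0),
            ← zpow_add₀ (RatFunc.X_ne_zero : XX ≠ 0)]
          congr 1
          rw [show ((b-1:ℕ):ℤ) = (b:ℤ) - 1 by omega,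
            show ((b+1:ℕ):ℤ) = (b:ℤ) + 1 by omega]
          linear_combination 2 * hμ'
        linear_combination (- bos r a B ((L:ℕ):ℤ) (μ-1)) * k1
          - (bos r a (B-1) ((L:ℕ):ℤ) μ) * k2
    · -- c + 1 = b
      have hbc' : c = b - 1 := by omega
      rw [conf_rec r L a b c (b+1) hr hb hc hc'
        (by right; omega) (by push_cast; omega)]
      rw [IH c b B μ hc hc' hb hb' (by left; omega)
        (by omega) (by omega)]
      have hbos := bos_rec₂ r a B ((L+1:ℕ):ℤ) μ (by omega) (by push_cast; omega)
      rw [hbos, hbos']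
      have k1 : XX ^ (((a:ℤ) - c) * ((a:ℤ) - b)) = XX ^ (((a:ℤ) - b) * ((a:ℤ) - c)) := by
        congr 1; ring
      rcases Nat.lt_or_ge b (r - 1) with hbr | hbr
      · rw [IH (b+1) b (B+1) (μ-1) (by omega) (by omega) hb hb' (by right; rfl)
          (by push_cast; omega) (by push_cast; omega)]
        have k2 : XX ^ (((a:ℤ) - b) * ((a:ℤ) - c)) * XX ^ (4*(((L+1:ℕ):ℤ) - μ))
            = XX ^ (2 * (L:ℤ) + 2) * XX ^ (((a:ℤ) - (b+1:ℕ)) * ((a:ℤ) - b)) := by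
          rw [← zpow_add₀ (RatFunc.X_ne_zero : XX ≠ 0),
            ← zpow_add₀ (RatFunc.X_ne_zero : XX ≠ 0)]
          congr 1
          rw [show ((b+1:ℕ):ℤ) = (b:ℤ) + 1 by omega,
            show ((L+1:ℕ):ℤ) = (L:ℤ) + 1 by omega]
          have hbcZ : (c:ℤ) + 1 = (b:ℤ) := by omega
          linear_combination -2 * hμ' - ((a:ℤ) - (b:ℤ)) * hbcZ
        linear_combination (bos r a B ((L:ℕ):ℤ) μ) * k1
          - (bos r a (B+1) ((L:ℕ):ℤ) (μ-1)) * k2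
      · -- b = r - 1 : second terms vanish on both sides
        have hb1 : b = r - 1 := by omega
        have hbr1 : b + 1 = r := by omega
        rw [hbr1, conf_b_r r L a b hr]
        rw [show B + 1 = (r:ℤ) - 1 by omega]
        rw [bos_vanish_r r a ((L:ℕ):ℤ) (μ-1) (by omega) (by omega)]
        simp only [mul_zero, add_zero]
        rw [k1]

/-- **Andrews–Baxter–Forrester**: the bosonic evaluation of the configuration sums
`X_L(a,b,c)`, `c = b ± 1`, stated in the variable `t = q^{1/4}` (all exponents
multiplied by `4`). -/
theorem abf_bosonic (r a b c L : ℕ) (hr : 3 ≤ r)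
    (ha : 1 ≤ a) (ha' : a ≤ r - 1) (hb : 1 ≤ b) (hb' : b ≤ r - 1)
    (hc : 1 ≤ c) (hc' : c ≤ r - 1) (hbc : c = b + 1 ∨ c + 1 = b)
    (hL : ((L : ℤ) + a - b) % 2 = 0) :
    conf r L a b c
      = (RatFunc.X : RatFunc ℚ) ^ (((a : ℤ) - b) * ((a : ℤ) - c))
          * ∑ᶠ j : ℤ,
            ((RatFunc.X : RatFunc ℚ) ^
                  (4 * (j * ((r : ℤ) * ((r : ℤ) - 1) * j
                    + (r : ℤ) * (((b : ℤ) + c - 1) / 2) - ((r : ℤ) - 1) * a)))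
                * gauss RatFunc.X (L : ℤ) (((L : ℤ) + a - b) / 2 - r * j)
              - (RatFunc.X : RatFunc ℚ) ^
                  (4 * ((((r : ℤ) - 1) * j + ((b : ℤ) + c - 1) / 2) * ((r : ℤ) * j + a)))
                * gauss RatFunc.X (L : ℤ) (((L : ℤ) - a - b) / 2 - r * j)) := by
  obtain ⟨B, hB⟩ : ∃ B : ℤ, 2 * B = (b : ℤ) + c - 1 := ⟨((b:ℤ)+c-1)/2, by omega⟩
  obtain ⟨μ, hμ⟩ : ∃ μ : ℤ, 2 * μ = (L : ℤ) + a - b := ⟨((L:ℤ)+a-b)/2, by omega⟩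
  rw [master r a hr ha ha' L b c B μ hb hb' hc hc' hbc hB hμ]
  congr 1
  simp only [show ((b:ℤ) + c - 1)/2 = B by omega, show ((L:ℤ) + a - b)/2 = μ by omega,
    show ((L:ℤ) - a - b)/2 = μ - a by omega]
  rfl
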